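/- For any random variable X with finite variance and any real number a, the variance of min(X, a) is at most the variance of X. -/

import Mathlib

open MeasureTheory ProbabilityTheory

lemma var_le_int_sq_sub {Ω : Type*} [MeasurableSpace Ω] (μ : Measure Ω)
    [IsProbabilityMeasure μ] {Y : Ω → ℝ} (hY : MemLp Y 2 μ) (c : ℝ) :
    variance Y μ ≤ ∫ ω, (Y ω - c) ^ 2 ∂μ := by
  rw [variance_eq_sub hY]
  have hInt : Integrable Y μ := hY.integrable one_le_two
  have hSq : Integrable (fun ω => Y ω ^ 2) μ := hY.integrable_sq
  have h : ∫ ω, (Y ω - c) ^ 2 ∂μ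
      = (∫ ω, Y ω ^ 2 ∂μ) - 2 * c * (∫ ω, Y ω ∂μ) + c ^ 2 := by
    have : ∀ ω, (Y ω - c) ^ 2 = Y ω ^ 2 - (2 * c) * Y ω + c ^ 2 := fun ω => by ring
    simp_rw [this]
    rw [integral_add (f := fun ω => Y ω ^ 2 - 2 * c * Y ω)
      (hSq.sub (hInt.const_mul (2 * c))) (integrable_const _),
      integral_sub hSq (hInt.const_mul (2 * c)), integral_const_mul, integral_const]
    simp
  rw [h]
  have hEY : μ[Y ^ 2] = ∫ ω, Y ω ^ 2 ∂μ := by rfl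
  rw [hEY]
  nlinarith [sq_nonneg ((∫ ω, Y ω ∂μ) - c)]

/-- For any real random variable `X` with finite second moment and any real `a`,
the variance of `min (X ·) a` is at most the variance of `X`. -/
theorem min_variance_le {Ω : Type*} [MeasurableSpace Ω]
    (μ : MeasureTheory.Measure Ω) [MeasureTheory.IsProbabilityMeasure μ]
    (X : Ω → ℝ) (hX : MeasureTheory.MemLp X 2 μ) (a : ℝ) :
    ProbabilityTheory.variance (fun ω => min (X ω) a) μ ≤ ProbabilityTheory.variance X μ := by
  set m := ∫ ω, X ω ∂μ with hm
  have hY : MemLp (fun ω => min (X ω) a) 2 μ := hX.inf (memLp_const a)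
  calc variance (fun ω => min (X ω) a) μ
      ≤ ∫ ω, (min (X ω) a - min m a) ^ 2 ∂μ := var_le_int_sq_sub μ hY _
    _ ≤ ∫ ω, (X ω - m) ^ 2 ∂μ := by
        apply integral_mono_of_nonneg (ae_of_all _ fun ω => sq_nonneg _)
          ((hX.sub (memLp_const m)).integrable_sq)
        filter_upwards with ω
        have h1 : |min (X ω) a - min m a| ≤ |X ω - m| := by
          have := abs_min_sub_min_le_max (X ω) a m a
          simpa using this
        calc (min (X ω) a - min m a) ^ 2 = |min (X ω) a - min m a| ^ 2 := (sq_abs _).symm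
          _ ≤ |X ω - m| ^ 2 := by gcongr
          _ = (X ω - m) ^ 2 := sq_abs _
    _ = variance X μ := by
        rw [variance_eq_integral hX.aestronglyMeasurable.aemeasurable]
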